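/- Let g' ≥ 4 be an even integer and let C be the oriented cycle on vertices w_1, …, w_{g'} with arcs w_{2i−1} → w_{2i} for 1 ≤ i ≤ g'/2, arcs w_{2i+1} → w_{2i} for 1 ≤ i ≤ g'/2 − 1, and the arc w_{g'} → w_1. Then there is no homomorphism φ from C to the tournament T4 on vertex set {1,2,3,4} with arcs 1→2, 1→3, 2→3, 2→4, 3→4, 4→1 such that φ(w_1) = 4. -/

import Mathlib

/-- An oriented graph: no loops, no pair of opposite arcs. -/
structure OrientedGraph (V : Type*) where
  arc : V → V → Prop
  irrefl : ∀ v, ¬ arc v v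
  asymm : ∀ u v, arc u v → ¬ arc v u

/-- The underlying simple graph of an oriented graph. -/
def OrientedGraph.underlying {V : Type*} (G : OrientedGraph V) : SimpleGraph V where
  Adj u v := G.arc u v ∨ G.arc v u
  symm := ⟨fun _ _ h => h.symm⟩
  loopless := ⟨fun v h => h.elim (G.irrefl v) (G.irrefl v)⟩

/-- Homomorphisms of oriented graphs. -/
def OrientedGraph.IsHom {V W : Type*} (G : OrientedGraph V) (H : OrientedGraph W)
    (φ : V → W) : Prop :=
  ∀ u v, G.arc u v → H.arc (φ u) (φ v)

/-- The tournament `T4` on vertex set `{1, 2, 3, 4}` (represented by `Fin 4`, with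
vertex `k+1` represented by `k`) with arcs `1→2, 1→3, 2→3, 2→4, 3→4, 4→1`. -/
def T4 : OrientedGraph (Fin 4) where
  arc a b := (a = 0 ∧ b = 1) ∨ (a = 0 ∧ b = 2) ∨ (a = 1 ∧ b = 2) ∨
    (a = 1 ∧ b = 3) ∨ (a = 2 ∧ b = 3) ∨ (a = 3 ∧ b = 0)
  irrefl := by decide
  asymm := by decide

/-- Let `g' ≥ 4` be even and let `C` be the oriented cycle on
vertices `w 1, …, w g'` with arcs `w (2i-1) → w (2i)` for `1 ≤ i ≤ g'/2`,
`w (2i+1) → w (2i)` for `1 ≤ i ≤ g'/2 - 1`, and `w g' → w 1`. Then no homomorphism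
`φ` from `C` to `T4` has `φ (w 1) = 4` (vertex `4` is represented by `3 : Fin 4`). -/
theorem no_hom_of_special_oriented_cycle_to_T4_mapping_first_vertex_to_four
    (g' : ℕ) (hg : 4 ≤ g') (heven : Even g') :
    ¬ ∃ φ : ℕ → Fin 4, φ 1 = 3 ∧
        (∀ i, 1 ≤ i → i ≤ g' / 2 → T4.arc (φ (2 * i - 1)) (φ (2 * i))) ∧
        (∀ i, 1 ≤ i → i ≤ g' / 2 - 1 → T4.arc (φ (2 * i + 1)) (φ (2 * i))) ∧
        T4.arc (φ g') (φ 1) := by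
  rintro ⟨φ, h1, hf, hb, hc⟩
  obtain ⟨m, hm⟩ := heven
  have hm2 : 2 ≤ m := by omega
  have hhalf : g' / 2 = m := by omega
  rw [hhalf] at hf hb
  -- key claim: for 1 ≤ i ≤ m, φ (2i-1) = 3 and φ (2i) = 0
  have key : ∀ i, 1 ≤ i → i ≤ m → φ (2 * i - 1) = 3 ∧ φ (2 * i) = 0 := by
    intro i
    induction i with
    | zero => omega
    | succ n ih =>
      intro _ hle
      rcases Nat.eq_or_lt_of_le (Nat.one_le_iff_ne_zero.mpr (Nat.succ_ne_zero n)) with h | h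
      · -- n = 0, base case
        have hn : n = 0 := by omega
        subst hn
        have harc := hf 1 le_rfl (by omega)
        norm_num at harc
        rw [h1] at harc
        have h2 : φ 2 = 0 := by
          simp only [T4] at harc
          rcases harc with ⟨h,_⟩|⟨h,_⟩|⟨h,_⟩|⟨h,_⟩|⟨h,_⟩|⟨_,h⟩ <;> first | exact h | exact absurd h (by decide)
        exact ⟨by simpa using h1, by simpa using h2⟩
      · have hn1 : 1 ≤ n := by omega
        obtain ⟨ho, he⟩ := ih hn1 (by omega)
        have harc1 := hb n hn1 (by omega)
        rw [he] at harc1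
        have hodd : φ (2 * n + 1) = 3 := by
          simp only [T4] at harc1
          rcases harc1 with ⟨_,h⟩|⟨_,h⟩|⟨_,h⟩|⟨_,h⟩|⟨_,h⟩|⟨h,_⟩ <;> first | exact h | exact absurd h (by decide)
        have harc2 := hf (n+1) (by omega) hle
        have h2n : 2 * (n + 1) - 1 = 2 * n + 1 := by omega
        rw [h2n, hodd] at harc2
        have heven' : φ (2 * (n + 1)) = 0 := by
          simp only [T4] at harc2
          rcases harc2 with ⟨h,_⟩|⟨h,_⟩|⟨h,_⟩|⟨h,_⟩|⟨h,_⟩|⟨_,h⟩ <;> first | exact h | exact absurd h (by decide)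
        exact ⟨by rw [h2n, hodd], heven'⟩
  have hlast : φ g' = 0 := by
    have h2m := (key m (by omega) le_rfl).2
    have : 2 * m = g' := by omega
    rwa [this] at h2m
  rw [hlast, h1] at hc
  simp only [T4] at hc
  revert hc
  decide
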